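/- Let G be a finite simple graph on n vertices admitting an ordering v_1, …, v_n of its vertices such that for every i, the vertex v_i has at most k neighbors among v_1, …, v_{i−1} and these earlier neighbors pairwise form a clique in G. Then G admits an acyclic proper vertex coloring with k + 1 colors. -/

import Mathlib

open Finset
open scoped Classical

/-- `cV` is an acyclic proper vertex coloring of `G` with `k` colors: adjacent
vertices get distinct colors, and the subgraph induced by the union of any two
color classes contains no cycle. -/
def IsAcyclicProperColoring {V : Type*} (G : SimpleGraph V) {k : ℕ}
    (cV : V → Fin k) : Prop :=
  (∀ u v, G.Adj u v → cV u ≠ cV v) ∧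
  ∀ a b : Fin k,
    (SimpleGraph.fromRel fun u v =>
      G.Adj u v ∧ (cV u = a ∨ cV u = b) ∧ (cV v = a ∨ cV v = b)).IsAcyclic


noncomputable def greedy {V : Type*} [Fintype V] (G : SimpleGraph V) (k : ℕ) (f : V → ℕ)
    (hdeg : ∀ v, (univ.filter fun u => G.Adj v u ∧ f u < f v).card ≤ k) (v : V) :
    Fin (k + 1) :=
  ((univ : Finset (Fin (k + 1))) \
    ((univ.filter fun u => G.Adj v u ∧ f u < f v).attach.image fun u =>
      greedy G k f hdeg u.1)).min' (by
    rw [← Finset.card_pos]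
    have h1 : ((univ.filter fun u => G.Adj v u ∧ f u < f v).attach.image fun u =>
        greedy G k f hdeg u.1).card ≤ k := by
      refine le_trans (Finset.card_image_le) ?_
      rw [Finset.card_attach]; exact hdeg v
    have h2 := Finset.card_sdiff_of_subset (Finset.subset_univ
      ((univ.filter fun u => G.Adj v u ∧ f u < f v).attach.image fun u =>
        greedy G k f hdeg u.1))
    rw [h2, Finset.card_univ, Fintype.card_fin]
    omega)
termination_by f v
decreasing_by all_goals
  (have := u.2; rw [Finset.mem_filter] at this; exact this.2.2)

lemma greedy_mem {V : Type*} [Fintype V] (G : SimpleGraph V) (k : ℕ) (f : V → ℕ)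
    (hdeg : ∀ v, (univ.filter fun u => G.Adj v u ∧ f u < f v).card ≤ k) (v : V) :
    greedy G k f hdeg v ∈ (univ : Finset (Fin (k + 1))) \
      ((univ.filter fun u => G.Adj v u ∧ f u < f v).attach.image fun u =>
        greedy G k f hdeg u.1) := by
  rw [greedy]
  exact Finset.min'_mem _ _

lemma greedy_ne {V : Type*} [Fintype V] (G : SimpleGraph V) (k : ℕ) (f : V → ℕ)
    (hdeg : ∀ v, (univ.filter fun u => G.Adj v u ∧ f u < f v).card ≤ k) (v u : V)
    (hadj : G.Adj v u) (hlt : f u < f v) :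
    greedy G k f hdeg u ≠ greedy G k f hdeg v := by
  intro h
  have hmem := greedy_mem G k f hdeg v
  rw [Finset.mem_sdiff] at hmem
  apply hmem.2
  rw [Finset.mem_image]
  exact ⟨⟨u, by simp [hadj, hlt]⟩, Finset.mem_attach _ _, h⟩


lemma acyclic_of_proper {V : Type*} [Fintype V] (G : SimpleGraph V) (k : ℕ) (f : V → ℕ)
    (hinj : Function.Injective f)
    (hclique : ∀ v u w, G.Adj v u → G.Adj v w → f u < f v → f w < f v →
      u ≠ w → G.Adj u w)
    (cV : V → Fin (k + 1)) (hproper : ∀ u v, G.Adj u v → cV u ≠ cV v)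
    (a b : Fin (k + 1)) :
    (SimpleGraph.fromRel fun u v =>
      G.Adj u v ∧ (cV u = a ∨ cV u = b) ∧ (cV v = a ∨ cV v = b)).IsAcyclic := by
  set H := SimpleGraph.fromRel fun u v =>
      G.Adj u v ∧ (cV u = a ∨ cV u = b) ∧ (cV v = a ∨ cV v = b) with hH
  -- extraction lemma
  have hext : ∀ x y : V, H.Adj x y → G.Adj x y ∧ (cV x = a ∨ cV x = b) ∧ (cV y = a ∨ cV y = b) := by
    intro x y hxy
    rw [hH, SimpleGraph.fromRel_adj] at hxy
    rcases hxy.2 with h | h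
    · exact h
    · exact ⟨h.1.symm, h.2.2, h.2.1⟩
  intro v p hp
  -- max vertex on the cycle
  obtain ⟨m, hmS, hmax⟩ := Finset.exists_max_image p.support.toFinset f
    ⟨v, by simp [SimpleGraph.Walk.start_mem_support]⟩
  rw [List.mem_toFinset] at hmS
  have hmax' : ∀ x ∈ p.support, f x ≤ f m := fun x hx => hmax x (List.mem_toFinset.2 hx)
  obtain ⟨q, hq, hsupp⟩ : ∃ q : H.Walk m m, q.IsCycle ∧ ∀ x ∈ q.support, x ∈ p.support := by
    refine ⟨p.rotate m hmS, hp.rotate hmS, ?_⟩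
    intro x hx
    rw [SimpleGraph.Walk.support_eq_cons (p.rotate m hmS)] at hx
    rw [List.mem_cons] at hx
    rcases hx with rfl | hx
    · exact hmS
    · have := (SimpleGraph.Walk.support_rotate p m hmS).mem_iff.1 (by exact hx)
      exact List.mem_of_mem_tail this
  cases q with
  | nil => exact hq.not_nil SimpleGraph.Walk.nil_nil
  | cons hadj r =>
    rename_i u
    have hum : u ≠ m := hadj.ne'
    obtain ⟨w, h2, s, hrs⟩ := SimpleGraph.Walk.exists_eq_cons_of_ne (Ne.symm hum) r.reverse
    -- w facts
    have hwm : w ≠ m := h2.ne'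
    have hwmem : w ∈ r.support := by
      have : w ∈ r.reverse.support := by
        rw [hrs]; simp
      rwa [SimpleGraph.Walk.support_reverse, List.mem_reverse] at this
    have humem : u ∈ r.support := r.start_mem_support
    have hup : u ∈ p.support := hsupp u (by simp [humem])
    have hwp : w ∈ p.support := hsupp w (by simp [hwmem])
    have hfu : f u < f m :=
      lt_of_le_of_ne (hmax' u hup) (fun h => hum (hinj h))
    have hfw : f w < f m :=
      lt_of_le_of_ne (hmax' w hwp) (fun h => hwm (hinj h))
    -- u ≠ w
    have huw : u ≠ w := by
      intro h
      subst h
      have hnodup := hq.isTrail.edges_nodup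
      rw [SimpleGraph.Walk.edges_cons] at hnodup
      have : s(m, u) ∈ r.edges := by
        have : s(m, u) ∈ r.reverse.edges := by rw [hrs]; simp
        rwa [SimpleGraph.Walk.edges_reverse, List.mem_reverse] at this
      exact (List.nodup_cons.1 hnodup).1 this
    -- colors
    obtain ⟨hGmu, hcm, hcu⟩ := hext m u hadj
    obtain ⟨hGmw, _, hcw⟩ := hext m w h2
    have h1 : cV m ≠ cV u := hproper m u hGmu
    have h3 : cV m ≠ cV w := hproper m w hGmw
    have h4 : cV u ≠ cV w := hproper u w (hclique m u w hGmu hGmw hfu hfw huw)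
    rcases hcm with rfl | rfl <;> rcases hcu with h | h <;> rcases hcw with h' | h' <;>
      first
        | exact h1 h.symm
        | exact h3 h'.symm
        | exact h4 (h.trans h'.symm)

/-- If a finite simple graph `G` admits an ordering of its vertices
(encoded by an injection `f : V → ℕ`) such that every vertex has at most `k`
earlier neighbors and these earlier neighbors form a clique, then `G` admits an
acyclic proper vertex coloring with `k + 1` colors. -/
theorem stmt12 {V : Type*} [Fintype V] (G : SimpleGraph V) (k : ℕ) (f : V → ℕ)
    (hinj : Function.Injective f)
    (hdeg : ∀ v, (univ.filter fun u => G.Adj v u ∧ f u < f v).card ≤ k)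
    (hclique : ∀ v u w, G.Adj v u → G.Adj v w → f u < f v → f w < f v →
      u ≠ w → G.Adj u w) :
    ∃ cV : V → Fin (k + 1), IsAcyclicProperColoring G cV := by
  have hproper : ∀ u v, G.Adj u v → greedy G k f hdeg u ≠ greedy G k f hdeg v := by
    intro u v huv
    rcases lt_trichotomy (f u) (f v) with h | h | h
    · exact greedy_ne G k f hdeg v u huv.symm h
    · exact absurd (hinj h) huv.ne
    · exact (greedy_ne G k f hdeg u v huv h).symm
  exact ⟨greedy G k f hdeg, hproper,
    fun a b => acyclic_of_proper G k f hinj hclique _ hproper a b⟩
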